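/- No cyclic group of order p ≥ 2 embeds into the multiplicative monoid of n×n upper triangular tropical integer matrices, for any n ≥ 1. -/

import Mathlib

/-- The max-plus tropical semiring `ℤ ∪ {-∞}`: tropical addition is `max`,
tropical multiplication is `+`, and `(0 : T)` is the tropical zero `-∞`. -/
abbrev T : Type := Tropical (WithTop ℤᵒᵈ)

/-- The element of the tropical semiring corresponding to the integer `k`. -/
def t (k : ℤ) : T := Tropical.trop ((OrderDual.toDual k : ℤᵒᵈ) : WithTop ℤᵒᵈ)

namespace NoUT

lemma add_le_left (u v : T) : u + v ≤ u := by
  rw [← Tropical.untrop_le_iff, Tropical.untrop_add]; exact min_le_left _ _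

lemma add_le_right (u v : T) : u + v ≤ v := by
  rw [← Tropical.untrop_le_iff, Tropical.untrop_add]; exact min_le_right _ _

lemma le_add (w u v : T) (h1 : w ≤ u) (h2 : w ≤ v) : w ≤ u + v := by
  rw [← Tropical.untrop_le_iff, Tropical.untrop_add]
  exact le_min (Tropical.untrop_le_iff.2 h1) (Tropical.untrop_le_iff.2 h2)

/-- The key algebraic lemma about idempotent (min-plus) addition. -/
lemma key_alg (a b M x1 xp xq : T)
    (E1 : x1 = a * xp + x1 * b + M)
    (E2 : x1 = a * x1 + xp * b + M)
    (E3 : xp = a * xp + xp * b + M)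
    (E4 : xp = a * xq + x1 * b + M) : x1 = xp := by
  have h11 : x1 ≤ a * xp := (E1.le.trans (add_le_left _ _)).trans (add_le_left _ _)
  have h12 : x1 ≤ xp * b := (E2.le.trans (add_le_left _ _)).trans (add_le_right _ _)
  have h13 : x1 ≤ M := E1.le.trans (add_le_right _ _)
  have hp1 : xp ≤ a * xp := (E3.le.trans (add_le_left _ _)).trans (add_le_left _ _)
  have hp2 : xp ≤ x1 * b := (E4.le.trans (add_le_left _ _)).trans (add_le_right _ _)
  have hp3 : xp ≤ M := E3.le.trans (add_le_right _ _)
  exact le_antisymm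
    (le_of_le_of_eq (le_add _ _ _ (le_add _ _ _ h11 h12) h13) E3.symm)
    (le_of_le_of_eq (le_add _ _ _ (le_add _ _ _ hp1 hp2) hp3) E1.symm)

/-- Diagonal entries of products of upper triangular tropical matrices multiply. -/
lemma tri_mul_diag {n : ℕ} (P Q : Matrix (Fin n) (Fin n) T)
    (hP : ∀ i j, j < i → P i j = 0) (hQ : ∀ i j, j < i → Q i j = 0) (i : Fin n) :
    (P * Q) i i = P i i * Q i i := by
  rw [Matrix.mul_apply]
  rw [show (Finset.univ : Finset (Fin n)) = insert i (Finset.univ.erase i) by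
    rw [Finset.insert_erase (Finset.mem_univ i)]]
  rw [Finset.sum_insert (Finset.notMem_erase i _)]
  have : ∑ k ∈ Finset.univ.erase i, P i k * Q k i = 0 := by
    apply Finset.sum_eq_zero
    intro k hk
    rcases lt_or_gt_of_ne (Finset.ne_of_mem_erase hk) with h | h
    · rw [hP i k h, zero_mul]
    · rw [hQ k i h, mul_zero]
  rw [this, add_zero]

/-- Entry formula for products of upper triangular tropical matrices. -/
lemma tri_mul_entry {n : ℕ} (P Q : Matrix (Fin n) (Fin n) T)
    (hP : ∀ i j, j < i → P i j = 0) (hQ : ∀ i j, j < i → Q i j = 0)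
    (i j : Fin n) (hij : i < j) :
    (P * Q) i j =
      P i i * Q i j + P i j * Q j j + ∑ k ∈ Finset.Ioo i j, P i k * Q k j := by
  rw [Matrix.mul_apply]
  have hsub : ∑ k ∈ Finset.univ, P i k * Q k j = ∑ k ∈ Finset.Icc i j, P i k * Q k j := by
    refine (Finset.sum_subset (Finset.subset_univ _) ?_).symm
    intro k _ hk
    rw [Finset.mem_Icc] at hk
    push_neg at hk
    rcases lt_or_ge k i with h | h
    · rw [hP i k h, zero_mul]
    · rw [hQ k j (hk h), mul_zero]
  rw [hsub, ← Finset.Ioc_insert_left hij.le, Finset.sum_insert Finset.left_notMem_Ioc,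
    ← Finset.Ioo_insert_right hij, Finset.sum_insert Finset.right_notMem_Ioo]
  ring

lemma coe_nsmul_top (m : ℕ) (z : ℤᵒᵈ) :
    (m • (z : WithTop ℤᵒᵈ)) = ((m • z : ℤᵒᵈ) : WithTop ℤᵒᵈ) := by
  induction m with
  | zero => simp
  | succ q ih => rw [succ_nsmul, ih, ← WithTop.coe_add, ← succ_nsmul]

/-- If `a = a ^ (p+1)` in `T` with `p ≥ 1`, then `a ^ m = a` for all `m ≥ 1`. -/
lemma diag_pow (p : ℕ) (hp : 1 ≤ p) (a : T) (ha : a = a ^ (p + 1)) :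
    ∀ m : ℕ, 1 ≤ m → a ^ m = a := by
  have h01 : a = 0 ∨ a = 1 := by
    by_cases h0 : a = 0
    · exact Or.inl h0
    · right
      have hu := congrArg Tropical.untrop ha
      rw [Tropical.untrop_pow] at hu
      obtain ⟨z, hz⟩ : ∃ z : ℤᵒᵈ, Tropical.untrop a = (z : WithTop ℤᵒᵈ) := by
        cases hua : Tropical.untrop a with
        | top =>
            exfalso; apply h0
            have : Tropical.untrop a = Tropical.untrop (0 : T) := by
              rw [hua, Tropical.untrop_zero]
            exact Tropical.untrop_injective this
        | coe z => exact ⟨z, rfl⟩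
      rw [hz, coe_nsmul_top] at hu
      have hz2 : z = (p + 1 : ℕ) • z := WithTop.coe_injective hu
      have hz3 : (OrderDual.ofDual z : ℤ) = (p + 1 : ℕ) • (OrderDual.ofDual z : ℤ) := hz2
      have hz0 : (OrderDual.ofDual z : ℤ) = 0 := by
        rw [nsmul_eq_mul] at hz3
        have hpz : (p : ℤ) * (OrderDual.ofDual z : ℤ) = 0 := by push_cast at hz3 ⊢; linarith
        rcases mul_eq_zero.1 hpz with h | h
        · exact absurd h (by exact_mod_cast Nat.one_le_iff_ne_zero.1 hp)
        · exact h
      have hz4 : z = (0 : ℤᵒᵈ) := hz0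
      have : Tropical.untrop a = Tropical.untrop (1 : T) := by
        rw [hz, hz4, Tropical.untrop_one]; rfl
      exact Tropical.untrop_injective this
  intro m hm
  rcases h01 with h | h
  · rw [h, zero_pow (by omega)]
  · rw [h, one_pow]

end NoUT

/-- No cyclic group of order `p ≥ 2` embeds into the monoid of `n × n` upper
triangular tropical matrices (for any `n ≥ 1`): there is no injective semigroup
homomorphism from such a group whose image consists of upper triangular matrices. -/
theorem no_cyclic_group_in_UT (n p : ℕ) (hn : 1 ≤ n) (hp : 2 ≤ p)
    (G : Type) [Group G] [IsCyclic G] (hG : Nat.card G = p) :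
    ¬ ∃ f : G →ₙ* Matrix (Fin n) (Fin n) T,
        Function.Injective f ∧ ∀ g : G, ∀ i j : Fin n, j < i → f g i j = 0 := by
  rintro ⟨f, hinj, hUT⟩
  -- get a nontrivial element
  have hnt : Nontrivial G := by
    rcases subsingleton_or_nontrivial G with h | h
    · exfalso
      haveI : Nonempty G := ⟨1⟩
      rw [Nat.card_unique] at hG; omega
    · exact h
  obtain ⟨g, hgne⟩ := exists_ne (1 : G)
  have hg1 : g ^ p = 1 := by rw [← hG]; exact pow_card_eq_one'
  set B := f g with hB
  -- f (g^m) = B^m for m ≥ 1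
  have hfp : ∀ m : ℕ, 1 ≤ m → f (g ^ m) = B ^ m := by
    intro m hm
    obtain ⟨k, rfl⟩ : ∃ k, m = k + 1 := ⟨m - 1, by omega⟩
    clear hm
    induction k with
    | zero => simp [hB]
    | succ l ih => rw [pow_succ, map_mul, ih, ← pow_succ]
  -- triangularity of all positive powers
  have hT : ∀ m : ℕ, 1 ≤ m → ∀ i j : Fin n, j < i → (B ^ m) i j = 0 := by
    intro m hm i j hij
    rw [← hfp m hm]; exact hUT _ i j hij
  have hT1 : ∀ i j : Fin n, j < i → B i j = 0 := fun i j h => hUT g i j h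
  -- periodicity facts
  have hBp1 : B ^ (p + 1) = B := by
    rw [← hfp (p + 1) (by omega), pow_succ, hg1, one_mul]
  have hB2p : B ^ (p + p) = B ^ p := by
    rw [← hfp (p + p) (by omega), ← hfp p (by omega)]
    congr 1
    rw [pow_add, hg1, one_mul]
  -- main induction
  have key : ∀ d : ℕ, ∀ i j : Fin n, (j : ℕ) - (i : ℕ) < d → i ≤ j →
      ∀ m : ℕ, 1 ≤ m → (B ^ m) i j = (B ^ p) i j := by
    intro d
    induction d with
    | zero => intro i j h; omega
    | succ d ih =>
      intro i j hlt hij m hm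
      rcases eq_or_lt_of_le hij with heq | hij'
      · -- diagonal case
        subst heq
        have hdiag : ∀ m : ℕ, 1 ≤ m → (B ^ m) i i = (B i i) ^ m := by
          intro m hm
          obtain ⟨k, rfl⟩ : ∃ k, m = k + 1 := ⟨m - 1, by omega⟩
          clear hm
          induction k with
          | zero => simp
          | succ l ihl =>
            rw [pow_succ, NoUT.tri_mul_diag _ _ (hT (l + 1) (by omega)) hT1, ihl, ← pow_succ]
        have ha : B i i = (B i i) ^ (p + 1) := by
          rw [← hdiag (p + 1) (by omega), hBp1]
        rw [hdiag m hm, hdiag p (by omega)]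
        rw [NoUT.diag_pow p (by omega) _ ha m hm, NoUT.diag_pow p (by omega) _ ha p (by omega)]
      · -- off-diagonal case
        have hd1 : 1 ≤ (j : ℕ) - (i : ℕ) := by
          have := Fin.lt_iff_val_lt_val.1 hij'; omega
        set a := (B ^ p) i i with ha
        set b := (B ^ p) j j with hb
        set M := ∑ k ∈ Finset.Ioo i j, (B ^ p) i k * (B ^ p) k j with hM
        have hdA : ∀ m : ℕ, 1 ≤ m → (B ^ m) i i = a :=
          fun m hm => ih i i (by omega) le_rfl m hm
        have hdB : ∀ m : ℕ, 1 ≤ m → (B ^ m) j j = b :=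
          fun m hm => ih j j (by omega) le_rfl m hm
        have hmul : ∀ m₁ m₂ : ℕ, 1 ≤ m₁ → 1 ≤ m₂ →
            (B ^ (m₁ + m₂)) i j = a * (B ^ m₂) i j + (B ^ m₁) i j * b + M := by
          intro m₁ m₂ h₁ h₂
          rw [pow_add, NoUT.tri_mul_entry _ _ (hT m₁ h₁) (hT m₂ h₂) i j hij']
          rw [hdA m₁ h₁, hdB m₂ h₂]
          congr 1
          apply Finset.sum_congr rfl
          intro k hk
          rw [Finset.mem_Ioo] at hk
          have h1 := Fin.lt_iff_val_lt_val.1 hk.1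
          have h2 := Fin.lt_iff_val_lt_val.1 hk.2
          rw [ih i k (by omega) (Fin.le_of_lt hk.1) m₁ h₁,
            ih k j (by omega) (Fin.le_of_lt hk.2) m₂ h₂]
        have E1 : B i j = a * (B ^ p) i j + B i j * b + M := by
          have := hmul 1 p le_rfl (by omega)
          rwa [show 1 + p = p + 1 by omega, hBp1, pow_one] at this
        have E2 : B i j = a * B i j + (B ^ p) i j * b + M := by
          have := hmul p 1 (by omega) le_rfl
          rwa [hBp1, pow_one] at this
        have E3 : (B ^ p) i j = a * (B ^ p) i j + (B ^ p) i j * b + M := by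
          have := hmul p p (by omega) (by omega)
          rwa [hB2p] at this
        have E4 : (B ^ p) i j = a * (B ^ (p - 1)) i j + B i j * b + M := by
          have := hmul 1 (p - 1) le_rfl (by omega)
          rwa [show 1 + (p - 1) = p by omega, pow_one] at this
        have hx1 : B i j = (B ^ p) i j :=
          NoUT.key_alg a b M (B i j) ((B ^ p) i j) ((B ^ (p - 1)) i j) E1 E2 E3 E4
        obtain ⟨k, rfl⟩ : ∃ k, m = k + 1 := ⟨m - 1, by omega⟩
        clear hm
        induction k with
        | zero => rw [pow_one]; exact hx1
        | succ l ihl =>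
          have hrec := hmul (l + 1) 1 (by omega) le_rfl
          rw [pow_one] at hrec
          rw [hrec, ihl, hx1]
          exact E3.symm
  -- conclude f g = f 1
  have hfe : f 1 = B ^ p := by
    rw [← hfp p (by omega), hg1]
  have hfg : f g = f 1 := by
    ext i j
    rcases le_or_gt i j with h | h
    · rw [hfe, ← hB]
      have := key ((j : ℕ) - (i : ℕ) + 1) i j (by omega) h 1 le_rfl
      rwa [pow_one] at this
    · rw [hUT g i j h, hUT 1 i j h]
  exact hgne (hinj hfg)
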